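/- Let Υ : ℝ → ℝ be a continuous 1-periodic function with ∫₀¹ Υ = μ. Then (√(A/π)) · ∫_{−∞}^{∞} Υ(x) e^(−Ax²) dx → μ as A → 0⁺. -/

import Mathlib

open MeasureTheory Filter Topology

theorem stmt_16 (Υ : ℝ → ℝ) (hcont : Continuous Υ)
    (hper : ∀ x : ℝ, Υ (x + 1) = Υ x)
    (μ : ℝ) (hμ : μ = ∫ x in (0 : ℝ)..1, Υ x) :
    Tendsto (fun A : ℝ => Real.sqrt (A / Real.pi) * ∫ x : ℝ, Υ x * Real.exp (-A * x ^ 2))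
      (nhdsWithin 0 (Set.Ioi 0)) (nhds μ) := by
  have hP : Function.Periodic Υ 1 := hper
  -- bound on Υ
  obtain ⟨C, hC⟩ : ∃ C, ∀ x, ‖Υ x‖ ≤ C := by
    have hb := hP.isBounded_of_continuous one_ne_zero hcont
    obtain ⟨C, hC⟩ := (isBounded_iff_forall_norm_le).mp hb
    exact ⟨C, fun x => hC _ (Set.mem_range_self x)⟩
  set φ : ℝ → ℝ := fun x => Υ x - μ with hφ
  have φcont : Continuous φ := hcont.sub continuous_const
  have φP : Function.Periodic φ 1 := fun x => by simp [hφ, hper x]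
  set F : ℝ → ℝ := fun x => ∫ t in (0:ℝ)..x, φ t with hF
  have hF' : ∀ x, HasDerivAt F (φ x) x := fun x =>
    intervalIntegral.integral_hasDerivAt_right (φcont.intervalIntegrable _ _)
      (φcont.stronglyMeasurableAtFilter _ _) φcont.continuousAt
  have Fcont : Continuous F := continuous_iff_continuousAt.mpr fun x => (hF' x).continuousAt
  have hint01 : ∫ t in (0:ℝ)..1, φ t = 0 := by
    rw [intervalIntegral.integral_sub (hcont.intervalIntegrable _ _)
      intervalIntegrable_const]
    simp [hμ]
  have FP : Function.Periodic F 1 := by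
    intro x
    have hadd : F x + ∫ t in x..x+1, φ t = F (x+1) :=
      intervalIntegral.integral_add_adjacent_intervals
        (φcont.intervalIntegrable _ _) (φcont.intervalIntegrable _ _)
    have : ∫ t in x..x+1, φ t = ∫ t in (0:ℝ)..0+1, φ t := φP.intervalIntegral_add_eq x 0
    rw [zero_add, hint01] at this
    rw [← hadd, this, add_zero]
  obtain ⟨D, hD⟩ : ∃ D, ∀ x, |F x| ≤ D := by
    have hb := FP.isBounded_of_continuous one_ne_zero Fcont
    obtain ⟨D, hD⟩ := (isBounded_iff_forall_norm_le).mp hb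
    exact ⟨D, fun x => hD _ (Set.mem_range_self x)⟩
  have hD0 : 0 ≤ D := le_trans (abs_nonneg _) (hD 0)
  -- key pointwise estimate
  have key : ∀ A : ℝ, 0 < A →
      |Real.sqrt (A / Real.pi) * (∫ x : ℝ, Υ x * Real.exp (-A * x ^ 2)) - μ|
        ≤ 2 * D * Real.sqrt (A / Real.pi) := by
    intro A hA
    set e : ℝ → ℝ := fun x => Real.exp (-A * x ^ 2) with he
    have hepos : ∀ x, 0 < e x := fun x => Real.exp_pos _
    have hDe : ∀ x, HasDerivAt e (-(2*A*x) * e x) x := by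
      intro x
      have h1 : HasDerivAt (fun y : ℝ => -A * y ^ 2) (-(2*A*x)) x := by
        have := (hasDerivAt_pow 2 x).const_mul (-A)
        exact this.congr_deriv (by simp; ring)
      have := h1.exp
      convert this using 1
      ring
    have hIe : Integrable e := integrable_exp_neg_mul_sq hA
    have hIxe : Integrable (fun x : ℝ => x * e x) := integrable_mul_exp_neg_mul_sq hA
    -- tendsto of e at ±∞
    have hetop : Tendsto e atTop (𝓝 0) := by
      have h1 : Tendsto (fun x : ℝ => A * x ^ 2) atTop atTop :=
        (tendsto_pow_atTop two_ne_zero).const_mul_atTop hA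
      have h2 : Tendsto (fun x : ℝ => -A * x ^ 2) atTop atBot :=
        (tendsto_neg_atTop_atBot.comp h1).congr fun x => (neg_mul A (x^2)).symm
      exact Real.tendsto_exp_atBot.comp h2
    have hebot : Tendsto e atBot (𝓝 0) := by
      have hcomp : Tendsto (e ∘ Neg.neg) atBot (𝓝 0) :=
        hetop.comp tendsto_neg_atBot_atTop
      have : e ∘ Neg.neg = e := by funext x; simp [he, Function.comp]
      rwa [this] at hcomp
    -- integrability of the two pieces
    have I1 : Integrable (fun x : ℝ => φ x * e x) :=
      hIe.bdd_mul φcont.aestronglyMeasurable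
        (Eventually.of_forall (fun x => by
          have : ‖φ x‖ ≤ ‖Υ x‖ + |μ| := by
            simpa [hφ, Real.norm_eq_abs] using abs_sub (Υ x) μ
          exact (this.trans (add_le_add_left (hC x) _) : ‖φ x‖ ≤ C + |μ|)))
    have I2 : Integrable (fun x : ℝ => F x * (-(2*A*x) * e x)) := by
      have h2 : Integrable (fun x : ℝ => (-(2*A) * F x) * (x * e x)) :=
        hIxe.bdd_mul (continuous_const.mul Fcont).aestronglyMeasurable
          (Eventually.of_forall (fun x => by
            rw [Real.norm_eq_abs, abs_mul, abs_neg, abs_mul, abs_of_pos two_pos,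
              abs_of_pos hA]
            exact (mul_le_mul_of_nonneg_left (hD x) (by positivity) : _ ≤ 2*A*D)))
      have : (fun x : ℝ => F x * (-(2*A*x) * e x))
          = fun x : ℝ => (-(2*A) * F x) * (x * e x) := by funext x; ring
      rwa [this]
    -- tendsto of G = F * e at ±∞
    have hGbound : ∀ x, |F x * e x| ≤ D * e x := fun x => by
      rw [abs_mul, abs_of_pos (hepos x)]
      exact mul_le_mul_of_nonneg_right (hD x) (hepos x).le
    have hDe0top : Tendsto (fun x => D * e x) atTop (𝓝 0) := by
      have := hetop.const_mul D; rwa [mul_zero] at this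
    have hDe0bot : Tendsto (fun x => D * e x) atBot (𝓝 0) := by
      have := hebot.const_mul D; rwa [mul_zero] at this
    have hGtop : Tendsto (fun x => F x * e x) atTop (𝓝 0) := by
      refine tendsto_of_tendsto_of_tendsto_of_le_of_le (g := fun x => -(D * e x))
        (by simpa using hDe0top.neg) hDe0top
        (fun x => (abs_le.mp (hGbound x)).1) (fun x => (abs_le.mp (hGbound x)).2)
    have hGbot : Tendsto (fun x => F x * e x) atBot (𝓝 0) := by
      refine tendsto_of_tendsto_of_tendsto_of_le_of_le (g := fun x => -(D * e x))
        (by simpa using hDe0bot.neg) hDe0bot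
        (fun x => (abs_le.mp (hGbound x)).1) (fun x => (abs_le.mp (hGbound x)).2)
    -- FTC on the whole line
    have hG : ∀ x, HasDerivAt (fun x => F x * e x)
        (φ x * e x + F x * (-(2*A*x) * e x)) x := fun x => (hF' x).mul (hDe x)
    have hzero : ∫ x : ℝ, (φ x * e x + F x * (-(2*A*x) * e x)) = 0 - 0 :=
      integral_of_hasDerivAt_of_tendsto hG (I1.add I2) hGbot hGtop
    rw [integral_add I1 I2, sub_zero] at hzero
    set R : ℝ := ∫ x : ℝ, F x * (-(2*A*x) * e x) with hR
    have hφe : ∫ x : ℝ, φ x * e x = -R := by linarith [hzero]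
    -- value of the Gaussian integral
    have hgauss : ∫ x : ℝ, e x = Real.sqrt (Real.pi / A) := integral_gaussian A
    -- decompose the main integral
    have hsplit : ∫ x : ℝ, Υ x * e x = -R + μ * Real.sqrt (Real.pi / A) := by
      have hfe : (fun x : ℝ => Υ x * e x) = fun x => φ x * e x + μ * e x := by
        funext x; simp [hφ]; ring
      rw [hfe, integral_add I1 (hIe.const_mul μ), hφe, integral_const_mul, hgauss]
    -- compute ∫ |x| e x = A⁻¹
    have hIoi : ∫ x in Set.Ioi (0:ℝ), x * e x = (2*A)⁻¹ := by
      have hderiv : ∀ x ∈ Set.Ici (0:ℝ),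
          HasDerivAt (fun y => -(2*A)⁻¹ * e y) (x * e x) x := by
        intro x _
        have := (hDe x).const_mul (-(2*A)⁻¹)
        exact this.congr_deriv (by field_simp)
      have htend : Tendsto (fun y => -(2*A)⁻¹ * e y) atTop (𝓝 0) := by
        have := hetop.const_mul (-(2*A)⁻¹); rwa [mul_zero] at this
      have := integral_Ioi_of_hasDerivAt_of_tendsto' hderiv hIxe.integrableOn htend
      rw [this]
      simp [he]
    have hJ : ∫ x : ℝ, |x| * e x = A⁻¹ := by
      have h1 : (fun x : ℝ => |x| * e x)
          = fun x : ℝ => |x| * Real.exp (-A * |x| ^ 2) := by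
        funext x; rw [sq_abs]
      rw [h1]
      rw [integral_comp_abs (f := fun t => t * Real.exp (-A * t ^ 2))]
      rw [show (∫ x in Set.Ioi (0:ℝ), x * Real.exp (-A * x ^ 2)) = (2*A)⁻¹ from hIoi]
      rw [mul_inv]
      rw [← mul_assoc]
      norm_num
    have hJint : Integrable (fun x : ℝ => |x| * e x) := by
      have := hIxe.abs
      have h2 : (fun x : ℝ => |x * e x|) = fun x : ℝ => |x| * e x := by
        funext x; rw [abs_mul, abs_of_pos (hepos x)]
      rwa [h2] at this
    -- bound on R
    have hRbound : |R| ≤ 2 * D := by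
      have hb : ∀ x : ℝ, ‖F x * (-(2*A*x) * e x)‖ ≤ (2*A*D) * (|x| * e x) := by
        intro x
        rw [Real.norm_eq_abs, abs_mul, abs_mul, abs_neg, abs_mul,
          abs_of_pos (show (0:ℝ) < 2*A by positivity), abs_of_pos (hepos x)]
        calc |F x| * (2 * A * |x| * e x) ≤ D * (2 * A * |x| * e x) :=
              mul_le_mul_of_nonneg_right (hD x) (by positivity)
          _ = (2*A*D) * (|x| * e x) := by ring
      have := norm_integral_le_of_norm_le (hJint.const_mul (2*A*D))
        (Eventually.of_forall hb)
      rw [integral_const_mul, hJ] at this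
      rw [hR, ← Real.norm_eq_abs]
      calc ‖∫ x : ℝ, F x * (-(2*A*x) * e x)‖ ≤ 2*A*D*A⁻¹ := this
        _ = 2 * D := by field_simp
    -- put it together
    have hAπ : Real.sqrt (A / Real.pi) * Real.sqrt (Real.pi / A) = 1 := by
      rw [← Real.sqrt_mul (by positivity)]
      rw [show A / Real.pi * (Real.pi / A) = 1 by
        field_simp]
      exact Real.sqrt_one
    have hval : Real.sqrt (A / Real.pi) * (∫ x : ℝ, Υ x * e x) - μ
        = -(Real.sqrt (A / Real.pi) * R) := by
      rw [hsplit]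
      have : Real.sqrt (A / Real.pi) * (-R + μ * Real.sqrt (Real.pi / A))
          = -(Real.sqrt (A / Real.pi) * R) + μ * (Real.sqrt (A / Real.pi) * Real.sqrt (Real.pi / A)) := by
        ring
      rw [this, hAπ]
      ring
    rw [hval, abs_neg, abs_mul, abs_of_nonneg (Real.sqrt_nonneg _)]
    calc Real.sqrt (A / Real.pi) * |R| ≤ Real.sqrt (A / Real.pi) * (2 * D) :=
          mul_le_mul_of_nonneg_left hRbound (Real.sqrt_nonneg _)
      _ = 2 * D * Real.sqrt (A / Real.pi) := by ring
  -- conclude by squeezing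
  have hsq : Tendsto (fun A : ℝ => 2 * D * Real.sqrt (A / Real.pi))
      (nhdsWithin 0 (Set.Ioi 0)) (𝓝 0) := by
    have hc : ContinuousAt (fun A : ℝ => 2 * D * Real.sqrt (A / Real.pi)) 0 := by
      fun_prop
    have := hc.tendsto.mono_left (nhdsWithin_le_nhds (s := Set.Ioi (0:ℝ)))
    simpa using this
  rw [tendsto_iff_dist_tendsto_zero]
  refine squeeze_zero' ?_ ?_ hsq
  · exact Eventually.of_forall fun A => dist_nonneg
  · filter_upwards [self_mem_nhdsWithin] with A hA
    rw [Real.dist_eq]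
    exact key A hA
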